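/- arXiv:1901.03689 — 3 statements merged into one kernel-verified Lean document; each statement's English description precedes it below -/
import Mathlib

section
/- Let C be a finite simple connected graph on vertex set V_C with edge set E_C, let k ≥ 1 be an integer, let T be a spanning tree of C rooted at r with U the set of vertices of depth at most k−1 in T, let S ⊆ E_C with a distinguished edge e ∈ S, and let H ⊆ E_C with all tree edges of T in H and e ∈ H. Assume: (a) every edge of S∖{e} with at least one endpoint in U belongs to H; (b) every edge of S∖{e} with both endpoints in U joins two vertices comparable in T; (c) for every subtree τ of T rooted at a vertex of depth k, every edge of S∖{e} with exactly one endpoint in τ joins two vertices comparable in T. Let T' be any spanning tree of the graph (V_C, H) rooted at r such that every edge of H joins two vertices comparable in T' and the depth of every vertex in T' is at least its depth in T (monotonic fall), and let U' be the set of vertices of depth at most k−1 in T'. Then: (1) every edge of S with both endpoints in U' joins two vertices comparable in T'; (2) for every subtree τ' of T' rooted at a vertex of depth k, every edge of S with exactly one endpoint in τ' joins two vertices comparable in T'; and (3) every edge of S with at least one endpoint in U' belongs to the set H' consisting of the tree edges of T' together with the edges of H having at least one endpoint in U'. -/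
namespace StreamDFS

/-- `u` is an ancestor of `v` in the tree `T` rooted at `r`:
`u` lies on (every) path in `T` from `r` to `v`. -/
def IsAncestor {V : Type*} (T : SimpleGraph V) (r u v : V) : Prop :=
  ∀ p : T.Walk r v, p.IsPath → u ∈ p.support

/-- `u` and `v` are comparable in the tree `T` rooted at `r`:
one is an ancestor of the other. -/
def Cmp {V : Type*} (T : SimpleGraph V) (r u v : V) : Prop :=
  IsAncestor T r u v ∨ IsAncestor T r v u

/-- The depth (level) of `v` in the tree `T` rooted at `r`. -/
noncomputable def depth {V : Type*} (T : SimpleGraph V) (r v : V) : ℕ := T.dist r v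

/-- The top `k` levels of the tree `T` rooted at `r`: vertices of depth at most `k-1`. -/
noncomputable def topLevels {V : Type*} (T : SimpleGraph V) (r : V) (k : ℕ) : Set V :=
  {v | depth T r v ≤ k - 1}

open SimpleGraph Walk

section Aux

variable {V : Type*} {T : SimpleGraph V} {r : V}

private lemma path_unique (hT : T.IsTree) {a b : V} {p q : T.Walk a b}
    (hp : p.IsPath) (hq : q.IsPath) : p = q :=
  ((hT.existsUnique_path a b).unique hp hq)

private lemma anc_iff (hT : T.IsTree) {u v : V} {p : T.Walk r v} (hp : p.IsPath) :
    IsAncestor T r u v ↔ u ∈ p.support :=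
  ⟨fun h => h p hp, fun h q hq => by rwa [path_unique hT hq hp]⟩

private lemma exists_path (hT : T.IsTree) (a b : V) :
    ∃ p : T.Walk a b, p.IsPath ∧ p.length = T.dist a b :=
  hT.isConnected.exists_path_of_dist a b

private lemma path_length (hT : T.IsTree) {v : V} {p : T.Walk r v} (hp : p.IsPath) :
    p.length = T.dist r v := by
  obtain ⟨q, hq, hql⟩ := exists_path hT r v
  rw [path_unique hT hp hq, hql]

private lemma anc_refl (v : V) : IsAncestor T r v v :=
  fun p _ => p.end_mem_support

private lemma anc_trans (hT : T.IsTree) {u a v : V}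
    (h1 : IsAncestor T r u a) (h2 : IsAncestor T r a v) : IsAncestor T r u v := by
  classical
  intro p hp
  have ha := h2 p hp
  have hu : u ∈ (p.takeUntil a ha).support := (anc_iff hT (hp.takeUntil ha)).1 h1
  exact p.support_takeUntil_subset ha hu

private lemma depth_le_of_anc (hT : T.IsTree) {u v : V} (h : IsAncestor T r u v) :
    T.dist r u ≤ T.dist r v := by
  classical
  obtain ⟨p, hp, hl⟩ := exists_path hT r v
  have hu := h p hp
  calc T.dist r u = (p.takeUntil u hu).length := (path_length hT (hp.takeUntil hu)).symm
    _ ≤ p.length := p.length_takeUntil_le hu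
    _ = T.dist r v := hl

private lemma eq_of_mem_take_drop [DecidableEq V] {a b u z : V} {p : T.Walk a b}
    (hp : p.IsPath) (hu : u ∈ p.support)
    (h1 : z ∈ (p.takeUntil u hu).support) (h2 : z ∈ (p.dropUntil u hu).support) : z = u := by
  by_contra hne
  have hnodup : (((p.takeUntil u hu).append (p.dropUntil u hu)).support).Nodup := by
    rw [take_spec]; exact hp.support_nodup
  rw [support_append] at hnodup
  have h2' : z ∈ (p.dropUntil u hu).support.tail := by
    have hc := support_eq_cons (p.dropUntil u hu)
    rw [hc] at h2
    rcases List.mem_cons.1 h2 with h | h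
    · exact absurd h hne
    · exact h
  exact (List.disjoint_of_nodup_append hnodup) h1 h2'

private lemma takeUntil_cons [DecidableEq V] {a c b u : V} (h : T.Adj a c) (q : T.Walk c b)
    (hu' : u ∈ q.support) (hne : a ≠ u) :
    (Walk.cons h q).takeUntil u (by simp [hu']) = Walk.cons h (q.takeUntil u hu') := by
  simp [Walk.takeUntil, hne]

private lemma takeUntil_order [DecidableEq V] {a b u w : V} {p : T.Walk a b}
    (hu : u ∈ p.support) (hw : w ∈ p.support) :
    u ∈ (p.takeUntil w hw).support ∨ w ∈ (p.takeUntil u hu).support := by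
  induction p with
  | nil =>
    left
    rw [mem_support_nil_iff] at hu hw
    subst hu; subst hw
    exact end_mem_support _
  | cons h q ih =>
    rename_i a' c' b'
    by_cases hua : u = a'
    · subst hua; left; exact start_mem_support _
    · by_cases hwa : w = a'
      · subst hwa; right; exact start_mem_support _
      · have hu' : u ∈ q.support := by
          rcases List.mem_cons.1 (by simpa using hu) with h1 | h1
          · exact absurd h1 hua
          · exact h1
        have hw' : w ∈ q.support := by
          rcases List.mem_cons.1 (by simpa using hw) with h1 | h1
          · exact absurd h1 hwa
          · exact h1
        rcases ih hu' hw' with h1 | h1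
        · left
          rw [takeUntil_cons h q hw' (fun hh => hwa hh.symm)]
          simp [h1]
        · right
          rw [takeUntil_cons h q hu' (fun hh => hua hh.symm)]
          simp [h1]

private lemma anc_of_mem_takeUntil [DecidableEq V] (hT : T.IsTree) {v u z : V} {p : T.Walk r v}
    (hp : p.IsPath) (hu : u ∈ p.support)
    (hz : z ∈ (p.takeUntil u hu).support) : IsAncestor T r z u := by
  classical
  exact (anc_iff hT (hp.takeUntil hu)).2 hz

private lemma cmp_of_anc_anc (hT : T.IsTree) {u w v : V}
    (h1 : IsAncestor T r u v) (h2 : IsAncestor T r w v) : Cmp T r u w := by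
  classical
  obtain ⟨p, hp, _⟩ := exists_path hT r v
  rcases takeUntil_order (h1 p hp) (h2 p hp) with h | h
  · exact Or.inl (anc_of_mem_takeUntil hT hp (h2 p hp) h)
  · exact Or.inr (anc_of_mem_takeUntil hT hp (h1 p hp) h)

private lemma eq_of_anc_of_dist_eq (hT : T.IsTree) {u w : V}
    (h : IsAncestor T r u w) (hd : T.dist r u = T.dist r w) : u = w := by
  classical
  obtain ⟨p, hp, hl⟩ := exists_path hT r w
  have hu := h p hp
  have h1 : (p.takeUntil u hu).length = T.dist r u := path_length hT (hp.takeUntil hu)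
  have h2 := congrArg Walk.length (p.take_spec hu)
  rw [length_append] at h2
  have h0 : (p.dropUntil u hu).length = 0 := by omega
  exact eq_of_length_eq_zero h0

private lemma uniq_anc_at_depth (hT : T.IsTree) {u w v : V}
    (h1 : IsAncestor T r u v) (h2 : IsAncestor T r w v)
    (hd : T.dist r u = T.dist r w) : u = w := by
  rcases cmp_of_anc_anc hT h1 h2 with h | h
  · exact eq_of_anc_of_dist_eq hT h hd
  · exact (eq_of_anc_of_dist_eq hT h hd.symm).symm

private lemma anc_of_mem_dropUntil [DecidableEq V] (hT : T.IsTree) {v w z : V} {p : T.Walk r v}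
    (hp : p.IsPath) (hw : w ∈ p.support)
    (hz : z ∈ (p.dropUntil w hw).support) : IsAncestor T r w z := by
  classical
  have hzp : z ∈ p.support := p.support_dropUntil_subset hw hz
  rcases takeUntil_order hw hzp with h | h
  · exact anc_of_mem_takeUntil hT hp hzp h
  · have : z = w := eq_of_mem_take_drop hp hw h hz
    subst this
    exact anc_refl z

private lemma exists_anc_at_depth (hT : T.IsTree) {v : V} {d : ℕ} (hd : d ≤ T.dist r v) :
    ∃ z, IsAncestor T r z v ∧ T.dist r z = d := by
  classical
  induction d with
  | zero => exact ⟨r, fun p _ => p.start_mem_support, by simp⟩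
  | succ d ih =>
    obtain ⟨z, hzanc, hzd⟩ := ih (le_trans (Nat.le_succ d) hd)
    obtain ⟨p, hp, hl⟩ := exists_path hT r v
    have hz := hzanc p hp
    have hzv : z ≠ v := by
      intro h; subst h; omega
    cases hq : p.dropUntil z hz with
    | nil => exact absurd rfl hzv
    | cons hadj q' =>
      rename_i c
      have hcdrop : c ∈ (p.dropUntil z hz).support := by
        rw [hq]
        exact List.mem_cons_of_mem _ q'.start_mem_support
      have hcv : IsAncestor T r c v :=
        (anc_iff hT hp).2 (p.support_dropUntil_subset hz hcdrop)
      refine ⟨c, hcv, ?_⟩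
      have hcz : c ≠ z := hadj.ne.symm
      have hcnot : c ∉ (p.takeUntil z hz).support := by
        intro hcc
        exact hcz (eq_of_mem_take_drop hp hz hcc hcdrop)
      have hwpath : ((p.takeUntil z hz).concat hadj).IsPath := by
        rw [isPath_def, support_concat]
        exact List.Nodup.append (hp.takeUntil hz).support_nodup (List.nodup_singleton c)
          (by simpa using hcnot)
      have := path_length hT hwpath
      rw [length_concat, path_length hT (hp.takeUntil hz), hzd] at this
      omega

private lemma same_k_anc (hT : T.IsTree) {a b y : V} {k : ℕ}
    (hcmp : Cmp T r a b) (hkb : k ≤ T.dist r b) (hy : T.dist r y = k)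
    (hya : IsAncestor T r y a) : IsAncestor T r y b := by
  rcases hcmp with h | h
  · exact anc_trans hT hya h
  · rcases cmp_of_anc_anc hT hya h with h1 | h1
    · exact h1
    · have hble : T.dist r b ≤ T.dist r y := depth_le_of_anc hT h1
      have : T.dist r b = T.dist r y := by omega
      have hby : b = y := uniq_anc_at_depth hT h hya (by omega)
      subst hby
      exact anc_refl b

private lemma walk_transfer {T' : SimpleGraph V} (hT' : T'.IsTree)
    {H : Set (Sym2 V)} (hTH : T.edgeSet ⊆ H)
    (hDFS : ∀ u v, s(u, v) ∈ H → Cmp T' r u v) {k : ℕ} {y : V}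
    (hy : T'.dist r y = k) {a b : V} (q : T.Walk a b) :
    (∀ z ∈ q.support, k ≤ T'.dist r z) → IsAncestor T' r y a → IsAncestor T' r y b := by
  induction q with
  | nil => exact fun _ h => h
  | cons hadj q ih =>
    rename_i a' c' b'
    intro hdeep hya
    have hH : s(a', c') ∈ H := hTH ((SimpleGraph.mem_edgeSet _).mpr hadj)
    have hcmp := hDFS _ _ hH
    have hdc : k ≤ T'.dist r c' := hdeep c' (by simp)
    exact ih (fun z hz => hdeep z (by simp [hz])) (same_k_anc hT' hcmp hdc hy hya)

end Aux

/-- **Lemma 5.3.**  On insertion of an edge `e`, any restructuring procedure which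
updates the tree `T` to a valid DFS tree `T'` of the stored subgraph `H` (which contains
`e`) ensuring monotonic fall, preserves the invariants `I_T` (`I_{T1}` and `I_{T2}`)
and `I_H` with respect to the set `S` of edges of the component seen so far. -/
theorem restructuring_preserves_invariants {V : Type*} [Fintype V]
    (G : SimpleGraph V) (hG : G.Connected)
    (k : ℕ) (hk : 1 ≤ k) (r : V)
    (T : SimpleGraph V) (hTG : T ≤ G) (hTree : T.IsTree)
    (S : Set (Sym2 V)) (hS : S ⊆ G.edgeSet)
    (e : Sym2 V) (heS : e ∈ S)
    (H : Set (Sym2 V)) (hHG : H ⊆ G.edgeSet) (hTH : T.edgeSet ⊆ H) (heH : e ∈ H)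
    -- (a) invariant I_H before processing e :
    (ha : ∀ u v, s(u, v) ∈ S → s(u, v) ≠ e →
      (u ∈ topLevels T r k ∨ v ∈ topLevels T r k) → s(u, v) ∈ H)
    -- (b) invariant I_{T1} before processing e :
    (hb : ∀ u v, s(u, v) ∈ S → s(u, v) ≠ e →
      u ∈ topLevels T r k → v ∈ topLevels T r k → Cmp T r u v)
    -- (c) invariant I_{T2} before processing e :
    (hc : ∀ x, depth T r x = k → ∀ u v, s(u, v) ∈ S → s(u, v) ≠ e →
      IsAncestor T r x u → ¬ IsAncestor T r x v → Cmp T r u v)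
    -- T' : the restructured tree, a DFS tree of (V, H) rooted at r, with monotonic fall :
    (T' : SimpleGraph V) (hT'H : T'.edgeSet ⊆ H) (hTree' : T'.IsTree)
    (hDFS : ∀ u v, s(u, v) ∈ H → Cmp T' r u v)
    (hmono : ∀ v, depth T r v ≤ depth T' r v) :
    -- (1) invariant I_{T1} for T' with respect to all of S :
    (∀ u v, s(u, v) ∈ S →
      u ∈ topLevels T' r k → v ∈ topLevels T' r k → Cmp T' r u v)
    -- (2) invariant I_{T2} for T' with respect to all of S :
    ∧ (∀ x, depth T' r x = k → ∀ u v, s(u, v) ∈ S →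
      IsAncestor T' r x u → ¬ IsAncestor T' r x v → Cmp T' r u v)
    -- (3) invariant I_H for the updated stored subgraph H' :
    ∧ (∀ u v, s(u, v) ∈ S →
      (u ∈ topLevels T' r k ∨ v ∈ topLevels T' r k) →
      s(u, v) ∈ T'.edgeSet ∪
        {f ∈ H | ∃ w ∈ topLevels T' r k, w ∈ f}) := by
  classical
  have hmono' : ∀ z : V, T.dist r z ≤ T'.dist r z := hmono
  have hdeepT : ∀ z : V, z ∉ topLevels T r k → k ≤ T.dist r z := by
    intro z hz
    have h1 : ¬ (T.dist r z ≤ k - 1) := hz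
    omega
  have htop : ∀ z : V, z ∈ topLevels T' r k → z ∈ topLevels T r k := by
    intro z hz
    exact le_trans (hmono' z) hz
  have hHmem : ∀ u v : V, s(u, v) ∈ S →
      (u ∈ topLevels T' r k ∨ v ∈ topLevels T' r k) → s(u, v) ∈ H := by
    intro u v hSuv hor
    by_cases he : s(u, v) = e
    · rw [he]; exact heH
    · exact ha u v hSuv he (hor.imp (htop u) (htop v))
  refine ⟨?_, ?_, ?_⟩
  · intro u v hSuv hu hv
    exact hDFS u v (hHmem u v hSuv (Or.inl hu))
  · intro x hx u v hSuv hxu hxv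
    by_cases hH' : s(u, v) ∈ H
    · exact hDFS u v hH'
    · exfalso
      have hne : s(u, v) ≠ e := fun h => hH' (h ▸ heH)
      have hduT : k ≤ T.dist r u := by
        apply hdeepT; intro htl
        exact hH' (ha u v hSuv hne (Or.inl htl))
      have hdvT : k ≤ T.dist r v := by
        apply hdeepT; intro htl
        exact hH' (ha u v hSuv hne (Or.inr htl))
      obtain ⟨w, hwu, hwd⟩ := exists_anc_at_depth hTree hduT
      have hwv : IsAncestor T r w v := by
        by_contra hnwv
        rcases hc w hwd u v hSuv hne hwu hnwv with h | h
        · exact hnwv (anc_trans hTree hwu h)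
        · rcases cmp_of_anc_anc hTree hwu h with h1 | h1
          · exact hnwv h1
          · have h2 : T.dist r v ≤ T.dist r w := depth_le_of_anc hTree h1
            have h3 : v = w := uniq_anc_at_depth hTree h hwu (by omega)
            exact hnwv (by rw [← h3]; exact anc_refl v)
      obtain ⟨pu, hpu, _⟩ := exists_path hTree r u
      obtain ⟨pv, hpv, _⟩ := exists_path hTree r v
      have hwpu := hwu pu hpu
      have hwpv := hwv pv hpv
      have hdeep : ∀ z ∈ ((pu.dropUntil w hwpu).reverse.append
          (pv.dropUntil w hwpv)).support, k ≤ T'.dist r z := by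
        intro z hz
        rw [Walk.mem_support_append_iff] at hz
        have hanc : IsAncestor T r w z := by
          rcases hz with hz | hz
          · rw [Walk.support_reverse, List.mem_reverse] at hz
            exact anc_of_mem_dropUntil hTree hpu hwpu hz
          · exact anc_of_mem_dropUntil hTree hpv hwpv hz
        have h4 := depth_le_of_anc hTree hanc
        have h5 := hmono' z
        omega
      exact hxv (walk_transfer hTree' hTH hDFS hx _ hdeep hxu)
  · intro u v hSuv hor
    refine Set.mem_union_right _ ?_
    refine ⟨hHmem u v hSuv hor, ?_⟩
    rcases hor with h | h
    · exact ⟨u, h, Sym2.mem_mk_left u v⟩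
    · exact ⟨v, h, Sym2.mem_mk_right u v⟩

end StreamDFS
end

section
/- Let G be a finite simple connected graph on vertex set V, let U ⊆ V be nonempty, and let T be a tree on U rooted at r whose edges are edges of G and which satisfies invariants I1 and I2 with respect to G. Then T extends to a DFS tree of G: there exists a spanning tree T* of G rooted at r whose edge set contains the edge set of T and in which every edge of G joins two vertices comparable in T*. -/
namespace StreamDFS

/-- `u` is a proper ancestor of `v` in the tree `T` rooted at `r`. -/
def ProperAncestor {V : Type*} (T : SimpleGraph V) (r u v : V) : Prop :=
  IsAncestor T r u v ∧ u ≠ v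

/-- `T` is a tree on the vertex set `U` all of whose edges are edges of `G`:
its edges lie within `U` and it induces a tree on `U`. -/
def TreeOn {V : Type*} (G T : SimpleGraph V) (U : Set V) : Prop :=
  T ≤ G ∧ (∀ u v, T.Adj u v → u ∈ U ∧ v ∈ U) ∧ (T.induce U).IsTree

/-- Invariant `I₁`: every edge of `G` with both endpoints in `U` joins two
vertices comparable in `T`. -/
def Inv1 {V : Type*} (G T : SimpleGraph V) (U : Set V) (r : V) : Prop :=
  ∀ u v, G.Adj u v → u ∈ U → v ∈ U → Cmp T r u v

/-- Invariant `I₂`: for every connected component of `G[V∖U]`, the vertices of `U`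
adjacent in `G` to that component are pairwise comparable in `T`. -/
def Inv2 {V : Type*} (G T : SimpleGraph V) (U : Set V) (r : V) : Prop :=
  ∀ u v (hu : u ∉ U) (hv : v ∉ U),
    (G.induce Uᶜ).Reachable ⟨u, hu⟩ ⟨v, hv⟩ →
    ∀ w z, w ∈ U → z ∈ U → G.Adj w u → G.Adj z v → Cmp T r w z

/-- The connected component of `G[V∖U]` containing `c₀` (for `c₀ ∉ U`). -/
def compOf {V : Type*} (G : SimpleGraph V) (U : Set V) (c₀ : V) : Set V :=
  {a | ∃ (hc : c₀ ∉ U) (ha : a ∉ U), (G.induce Uᶜ).Reachable ⟨c₀, hc⟩ ⟨a, ha⟩}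

/-! ### Auxiliary lemmas -/

open SimpleGraph Walk

section Aux

variable {V : Type*} {G T : SimpleGraph V} {U : Set V} {r u v d a : V}

lemma isAncestor_refl (T : SimpleGraph V) (r v : V) : IsAncestor T r v v :=
  fun p _ => p.end_mem_support

lemma dist_lt_of_isAncestor (hrv : T.Reachable r v) (h : IsAncestor T r u v)
    (hne : u ≠ v) : T.dist r u < T.dist r v := by
  classical
  obtain ⟨p, hp, hlen⟩ := hrv.exists_path_of_dist
  have hu := h p hp
  have h1 : T.dist r u ≤ (p.takeUntil u hu).length := SimpleGraph.dist_le _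
  have h2 : (p.takeUntil u hu).length + (p.dropUntil u hu).length = p.length := by
    rw [← Walk.length_append, p.take_spec hu]
  have h3 : (p.dropUntil u hu).length ≠ 0 := fun h0 => hne (Walk.eq_of_length_eq_zero h0)
  omega

/-- Walk into the induced subgraph, given all support vertices lie in `s`. -/
def toInduceWalk {s : Set V} :
    ∀ {x y : V} (p : T.Walk x y) (hx : x ∈ s) (hy : y ∈ s),
      (∀ v ∈ p.support, v ∈ s) → (T.induce s).Walk ⟨x, hx⟩ ⟨y, hy⟩
  | _, _, Walk.nil, _, _, _ => Walk.nil
  | _, _, Walk.cons h q, hx, hy, hp =>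
      Walk.cons (by simpa using h)
        (toInduceWalk q (hp _ (by simp)) hy (fun v hv => hp v (by simp [hv])))

lemma map_toInduceWalk {s : Set V} :
    ∀ {x y : V} (p : T.Walk x y) (hx : x ∈ s) (hy : y ∈ s)
      (hp : ∀ v ∈ p.support, v ∈ s),
      (toInduceWalk p hx hy hp).map (SimpleGraph.Embedding.induce s).toHom = p
  | _, _, Walk.nil, _, _, _ => rfl
  | _, _, Walk.cons h q, hx, hy, hp => by
      simp only [toInduceWalk, Walk.map_cons]
      congr 1
      exact map_toInduceWalk q _ _ _

lemma support_toInduceWalk {s : Set V} :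
    ∀ {x y : V} (p : T.Walk x y) (hx : x ∈ s) (hy : y ∈ s)
      (hp : ∀ v ∈ p.support, v ∈ s),
      (toInduceWalk p hx hy hp).support.map Subtype.val = p.support
  | _, _, Walk.nil, _, _, _ => rfl
  | _, _, Walk.cons h q, hx, hy, hp => by
      simp only [toInduceWalk, Walk.support_cons, List.map_cons]
      congr 1
      exact support_toInduceWalk q _ _ _

lemma isPath_toInduceWalk {s : Set V} {x y : V} (p : T.Walk x y) (hx : x ∈ s) (hy : y ∈ s)
    (hp : ∀ v ∈ p.support, v ∈ s) (h : p.IsPath) : (toInduceWalk p hx hy hp).IsPath := by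
  rw [Walk.isPath_def] at h ⊢
  have := support_toInduceWalk p hx hy hp
  exact List.Nodup.of_map Subtype.val (by rw [this]; exact h)

lemma mem_support_mem (hE : ∀ u v, T.Adj u v → u ∈ U ∧ v ∈ U) :
    ∀ {x y : V} (p : T.Walk x y), ∀ w ∈ p.support, w ∈ U ∨ (w = x ∧ w = y) := by
  intro x y p
  induction p with
  | nil => intro w hw; right; simp at hw; exact ⟨hw, hw⟩
  | cons h q ih =>
    intro w hw
    rw [Walk.support_cons, List.mem_cons] at hw
    rcases hw with rfl | hw
    · exact Or.inl (hE _ _ h).1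
    · rcases ih w hw with h' | ⟨rfl, rfl⟩
      · exact Or.inl h'
      · exact Or.inl (hE _ _ h).2

lemma acyclic_of_treeOn (hE : ∀ u v, T.Adj u v → u ∈ U ∧ v ∈ U)
    (htree : (T.induce U).IsAcyclic) : T.IsAcyclic := by
  rw [SimpleGraph.isAcyclic_iff_path_unique]
  intro x y p q
  by_cases hxy : x = y
  · subst hxy
    rw [SimpleGraph.Path.loop_eq p, SimpleGraph.Path.loop_eq q]
  · have hsupp : ∀ (pp : T.Walk x y), ∀ w ∈ pp.support, w ∈ U := by
      intro pp w hw
      rcases mem_support_mem hE pp w hw with h | ⟨rfl, rfl⟩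
      · exact h
      · exact absurd rfl hxy
    have hx : x ∈ U := hsupp p.1 x p.1.start_mem_support
    have hy : y ∈ U := hsupp p.1 y p.1.end_mem_support
    have hpq : (⟨toInduceWalk p.1 hx hy (hsupp p.1), isPath_toInduceWalk _ _ _ _ p.2⟩ :
        (T.induce U).Path ⟨x, hx⟩ ⟨y, hy⟩) =
        ⟨toInduceWalk q.1 hx hy (hsupp q.1), isPath_toInduceWalk _ _ _ _ q.2⟩ :=
      SimpleGraph.isAcyclic_iff_path_unique.mp htree _ _
    have hval : toInduceWalk p.1 hx hy (hsupp p.1) = toInduceWalk q.1 hx hy (hsupp q.1) :=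
      congrArg Subtype.val hpq
    refine Subtype.ext ?_
    have hm1 := map_toInduceWalk (s := U) p.1 hx hy (hsupp p.1)
    have hm2 := map_toInduceWalk (s := U) q.1 hx hy (hsupp q.1)
    rw [← hm1, ← hm2, hval]

lemma only_nbr (hd : d ∈ U) (ha : a ∉ U) (hE : ∀ u v, T.Adj u v → u ∈ U ∧ v ∈ U)
    (w : V) (h : (T ⊔ SimpleGraph.fromEdgeSet {s(d, a)}).Adj a w) : w = d := by
  rcases (SimpleGraph.sup_adj _ _ _ _).mp h with h' | h'
  · exact absurd (hE _ _ h').1 ha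
  · rw [SimpleGraph.fromEdgeSet_adj, Set.mem_singleton_iff, Sym2.eq_iff] at h'
    rcases h'.1 with ⟨h1, h2⟩ | ⟨h1, h2⟩
    · exact absurd (h1 ▸ hd) ha
    · exact h2

lemma avoid (hd : d ∈ U) (ha : a ∉ U) (hE : ∀ u v, T.Adj u v → u ∈ U ∧ v ∈ U) :
    ∀ {x y : V} (p : (T ⊔ SimpleGraph.fromEdgeSet {s(d, a)}).Walk x y),
    p.IsPath → x ≠ a → y ≠ a → a ∉ p.support := by
  intro x y p
  induction p with
  | nil => intro _ hx _; simpa using fun h => hx h.symm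
  | @cons x m y h q ih =>
    intro hp hx hy
    rw [Walk.cons_isPath_iff] at hp
    rw [Walk.support_cons, List.mem_cons]
    push_neg
    refine ⟨fun h' => hx h'.symm, ?_⟩
    by_cases hm : m = a
    · exfalso
      have hxd : x = d := only_nbr hd ha hE x (by rw [hm] at h; exact h.symm)
      have hmy : m ≠ y := fun h' => hy (h' ▸ hm)
      obtain ⟨w', hadj, q', hq⟩ := Walk.exists_eq_cons_of_ne hmy q
      have hw' : w' = d := only_nbr hd ha hE w' (by rw [hm] at hadj; exact hadj)
      subst hw'
      apply hp.2
      rw [hq, hxd, Walk.support_cons]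
      exact List.mem_cons_of_mem _ q'.start_mem_support
    · exact ih hp.1 hm hy

lemma edges_in_T {x y : V} (p : (T ⊔ SimpleGraph.fromEdgeSet {s(d, a)}).Walk x y)
    (hna : a ∉ p.support) : ∀ e ∈ p.edges, e ∈ T.edgeSet := by
  intro e he
  have h1 : e ∈ (T ⊔ SimpleGraph.fromEdgeSet {s(d, a)}).edgeSet := p.edges_subset_edgeSet he
  rw [SimpleGraph.edgeSet_sup, SimpleGraph.edgeSet_fromEdgeSet] at h1
  rcases h1 with h1 | h1
  · exact h1
  · exfalso
    have : e = s(d, a) := h1.1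
    subst this
    exact hna (p.snd_mem_support_of_mem_edges he)

lemma liftAnc (hd : d ∈ U) (ha : a ∉ U) (hE : ∀ u v, T.Adj u v → u ∈ U ∧ v ∈ U)
    (hra : r ≠ a) (hva : v ≠ a)
    (h : IsAncestor T r u v) : IsAncestor (T ⊔ SimpleGraph.fromEdgeSet {s(d, a)}) r u v := by
  intro p hp
  have hna := avoid hd ha hE p hp hra hva
  have hu := h (p.transfer T (edges_in_T p hna)) (hp.transfer _)
  rwa [Walk.support_transfer] at hu

lemma ancToA (hd : d ∈ U) (ha : a ∉ U) (hE : ∀ u v, T.Adj u v → u ∈ U ∧ v ∈ U) (hra : r ≠ a)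
    (h : IsAncestor (T ⊔ SimpleGraph.fromEdgeSet {s(d, a)}) r u d) :
    IsAncestor (T ⊔ SimpleGraph.fromEdgeSet {s(d, a)}) r u a := by
  intro p hp
  obtain ⟨w, h1, q1, heq⟩ := Walk.exists_eq_cons_of_ne (fun h' => hra h'.symm) p.reverse
  have hw : w = d := only_nbr hd ha hE w h1
  subst hw
  have hrev : p.reverse.IsPath := hp.reverse
  rw [heq, Walk.cons_isPath_iff] at hrev
  have hu : u ∈ q1.reverse.support := h q1.reverse hrev.1.reverse
  rw [Walk.support_reverse, List.mem_reverse] at hu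
  have : u ∈ p.reverse.support := by rw [heq, Walk.support_cons]; exact List.mem_cons_of_mem _ hu
  rwa [Walk.support_reverse, List.mem_reverse] at this

lemma acyc' (hd : d ∈ U) (ha : a ∉ U) (hE : ∀ u v, T.Adj u v → u ∈ U ∧ v ∈ U)
    (hT : T.IsAcyclic) : (T ⊔ SimpleGraph.fromEdgeSet {s(d, a)}).IsAcyclic := by
  classical
  intro x c hc
  by_cases hax : a ∈ c.support
  · have hc' := hc.rotate hax
    set c' := c.rotate a hax with hceq
    clear_value c'
    cases c' with
    | nil => simp at hc'
    | @cons _ m _ h q =>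
      have hm : m = d := only_nbr hd ha hE m h
      have h3 := hc'.three_le_length
      rw [Walk.cons_isCycle_iff] at hc'
      have ham : a ≠ m := fun h' => ha (by rw [h', hm]; exact hd)
      obtain ⟨w2, h2, q2, hq2⟩ := Walk.exists_eq_cons_of_ne ham q.reverse
      have hw2 : w2 = d := only_nbr hd ha hE w2 h2
      have hq2path : q.reverse.IsPath := hc'.1.reverse
      rw [hq2, Walk.cons_isPath_iff] at hq2path
      have hnil : q2.length = 0 := by
        cases q2 with
        | nil => rfl
        | cons h3' q3 =>
          exfalso
          rw [Walk.cons_isPath_iff] at hq2path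
          refine hq2path.1.2 ?_
          have : w2 = m := hw2.trans hm.symm
          rw [this]
          exact q3.end_mem_support
      have hlen : q.length = 1 := by
        have hl := congrArg Walk.length hq2
        rw [Walk.length_reverse, Walk.length_cons, hnil] at hl
        exact hl
      rw [Walk.length_cons, hlen] at h3
      omega
  · exact hT _ (hc.transfer (edges_in_T c hax))

lemma exists_boundary (hr : r ∈ U) :
    ∀ {x : V}, G.Walk x r → x ∉ U → ∃ b w, b ∉ U ∧ w ∈ U ∧ G.Adj w b := by
  intro x p
  induction p with
  | nil => exact fun hx => absurd hr hx
  | @cons x m _ h q ih =>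
    intro hx
    by_cases hm : m ∈ U
    · exact ⟨x, m, hx, hm, h.symm⟩
    · exact ih hr hm

lemma reach_mono {s t : Set V} (hst : s ⊆ t) {x y : V} (hx : x ∈ s) (hy : y ∈ s)
    (h : (G.induce s).Reachable ⟨x, hx⟩ ⟨y, hy⟩) :
    (G.induce t).Reachable ⟨x, hst hx⟩ ⟨y, hst hy⟩ :=
  h.map (SimpleGraph.induceHomOfLE G hst).toHom

lemma aux_univ (G T : SimpleGraph V) (r : V) (hTG : T ≤ G) (hTac : T.IsAcyclic)
    (hTreach : ∀ u, T.Reachable r u) (h1 : ∀ u v, G.Adj u v → Cmp T r u v) :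
    ∃ Tstar : SimpleGraph V, T ≤ Tstar ∧ Tstar ≤ G ∧ Tstar.IsTree ∧
      ∀ u v, G.Adj u v → Cmp Tstar r u v :=
  ⟨T, le_refl _, hTG,
    ⟨(SimpleGraph.connected_iff _).mpr ⟨fun x y => (hTreach x).symm.trans (hTreach y), ⟨r⟩⟩, hTac⟩,
    h1⟩

end Aux

lemma aux {V : Type*} [Fintype V] (G : SimpleGraph V) (r : V) (hG : G.Connected) :
    ∀ (k : ℕ) (U : Set V) (T : SimpleGraph V), Uᶜ.ncard ≤ k → r ∈ U →
    T ≤ G → (∀ u v, T.Adj u v → u ∈ U ∧ v ∈ U) → T.IsAcyclic →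
    (∀ u ∈ U, T.Reachable r u) → Inv1 G T U r → Inv2 G T U r →
    ∃ Tstar : SimpleGraph V, T ≤ Tstar ∧ Tstar ≤ G ∧ Tstar.IsTree ∧
      ∀ u v, G.Adj u v → Cmp Tstar r u v := by
  intro k
  induction k with
  | zero =>
    intro U T hcard hr hTG hTE hTac hTreach h1 h2
    have hU : U = Set.univ := by
      have h0 : Uᶜ = ∅ := (Set.ncard_eq_zero Uᶜ.toFinite).mp (Nat.le_zero.mp hcard)
      rwa [Set.compl_empty_iff] at h0
    subst hU
    exact aux_univ G T r hTG hTac (fun u => hTreach u trivial)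
      (fun u v huv => h1 u v huv trivial trivial)
  | succ k ih =>
    intro U T hcard hr hTG hTE hTac hTreach h1 h2
    by_cases hUuniv : U = Set.univ
    · subst hUuniv
      exact aux_univ G T r hTG hTac (fun u => hTreach u trivial)
        (fun u v huv => h1 u v huv trivial trivial)
    · obtain ⟨x, hx⟩ := (Set.ne_univ_iff_exists_notMem U).mp hUuniv
      obtain ⟨p⟩ := hG.preconnected x r
      obtain ⟨a₀, w₀, ha₀, hw₀, hadj₀⟩ := exists_boundary hr p hx
      set N : Set V := {z | z ∈ U ∧ ∃ b, ∃ hb : b ∈ Uᶜ, G.Adj z b ∧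
        (G.induce Uᶜ).Reachable ⟨a₀, ha₀⟩ ⟨b, hb⟩} with hN
      have hw₀N : w₀ ∈ N := ⟨hw₀, a₀, ha₀, hadj₀, Reachable.refl _⟩
      obtain ⟨d, hdN, hdmax⟩ := Set.exists_max_image N (T.dist r) N.toFinite ⟨w₀, hw₀N⟩
      obtain ⟨hdU, a, haC, hda, hreachA⟩ := hdN
      have haU : a ∉ U := haC
      have hra : r ≠ a := fun h' => haU (h' ▸ hr)
      have hda' : d ≠ a := fun h' => haU (h' ▸ hdU)
      have hanc : ∀ z ∈ N, IsAncestor T r z d := by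
        intro z hz
        obtain ⟨hzU, b, hb, hzb, hreachB⟩ := hz
        have hcmp : Cmp T r z d := h2 b a hb haC (hreachB.symm.trans hreachA) z d hzU hdU hzb hda
        rcases hcmp with h' | h'
        · exact h'
        · by_cases hzd : d = z
          · subst hzd; exact isAncestor_refl T r d
          · exfalso
            have hlt := dist_lt_of_isAncestor (hTreach z hzU) h' hzd
            have := hdmax z ⟨hzU, b, hb, hzb, hreachB⟩
            omega
      set T' := T ⊔ SimpleGraph.fromEdgeSet {s(d, a)} with hT'
      set U' := insert a U with hU'
      have hTT' : T ≤ T' := le_sup_left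
      have hadjT' : T'.Adj d a := by
        rw [hT', SimpleGraph.sup_adj]
        right
        rw [SimpleGraph.fromEdgeSet_adj]
        exact ⟨rfl, hda'⟩
      have hE' : ∀ u v, T'.Adj u v → u ∈ U' ∧ v ∈ U' := by
        intro u v huv
        rcases (SimpleGraph.sup_adj _ _ _ _).mp huv with h' | h'
        · exact ⟨Set.mem_insert_of_mem _ (hTE _ _ h').1, Set.mem_insert_of_mem _ (hTE _ _ h').2⟩
        · rw [SimpleGraph.fromEdgeSet_adj, Set.mem_singleton_iff, Sym2.eq_iff] at h'
          rcases h'.1 with ⟨rfl, rfl⟩ | ⟨rfl, rfl⟩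
          · exact ⟨Set.mem_insert_of_mem _ hdU, Set.mem_insert _ _⟩
          · exact ⟨Set.mem_insert _ _, Set.mem_insert_of_mem _ hdU⟩
      have hliftC : ∀ {z w : V}, z ∈ U → w ∈ U → Cmp T r z w → Cmp T' r z w := by
        intro z w hz hw
        exact Or.imp (liftAnc hdU haU hTE hra (fun h' => haU (h' ▸ hw)))
                     (liftAnc hdU haU hTE hra (fun h' => haU (h' ▸ hz)))
      have hancA : ∀ z ∈ N, IsAncestor T' r z a := by
        intro z hz
        exact ancToA hdU haU hTE hra
          (liftAnc hdU haU hTE hra (fun h' => haU (h' ▸ hdU)) (hanc z hz))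
      have hcard' : U'ᶜ.ncard ≤ k := by
        have hc1 : U'ᶜ = Uᶜ \ {a} := by
          rw [hU']
          ext y
          simp only [Set.mem_compl_iff, Set.mem_insert_iff, Set.mem_diff,
            Set.mem_singleton_iff]
          tauto
        have hc2 := Set.ncard_diff_singleton_add_one (show a ∈ Uᶜ from haU) Uᶜ.toFinite
        rw [hc1]
        omega
      have hr' : r ∈ U' := Set.mem_insert_of_mem _ hr
      have hT'G : T' ≤ G := by
        rw [hT']
        refine sup_le hTG ?_
        intro u v huv
        rw [SimpleGraph.fromEdgeSet_adj, Set.mem_singleton_iff, Sym2.eq_iff] at huv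
        rcases huv.1 with ⟨rfl, rfl⟩ | ⟨rfl, rfl⟩
        · exact hda
        · exact hda.symm
      have hT'ac : T'.IsAcyclic := acyc' hdU haU hTE hTac
      have hT'reach : ∀ u ∈ U', T'.Reachable r u := by
        intro u hu
        rcases Set.mem_insert_iff.mp hu with rfl | hu'
        · exact ((hTreach d hdU).mono hTT').trans hadjT'.reachable
        · exact (hTreach u hu').mono hTT'
      have h1' : Inv1 G T' U' r := by
        intro u v huv hu hv
        rcases Set.mem_insert_iff.mp hu with rfl | huU
        · rcases Set.mem_insert_iff.mp hv with rfl | hvU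
          · exact absurd huv (G.loopless.irrefl _)
          · exact Or.inr (hancA v ⟨hvU, u, haU, huv.symm, hreachA⟩)
        · rcases Set.mem_insert_iff.mp hv with rfl | hvU
          · exact Or.inl (hancA u ⟨huU, v, haU, huv, hreachA⟩)
          · exact hliftC huU hvU (h1 u v huv huU hvU)
      have h2' : Inv2 G T' U' r := by
        intro u v hu hv hreach w z hw hz hwu hzv
        have huU : u ∉ U := fun h' => hu (Set.mem_insert_of_mem _ h')
        have hvU : v ∉ U := fun h' => hv (Set.mem_insert_of_mem _ h')
        have hsub : U'ᶜ ⊆ Uᶜ := by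
          intro y hy
          rw [hU'] at hy
          exact fun h' => hy (Set.mem_insert_of_mem _ h')
        have hreachUV : (G.induce Uᶜ).Reachable ⟨u, huU⟩ ⟨v, hvU⟩ :=
          reach_mono hsub hu hv hreach
        rcases Set.mem_insert_iff.mp hw with rfl | hwU
        · have hreachAU : (G.induce Uᶜ).Reachable ⟨a₀, ha₀⟩ ⟨u, huU⟩ :=
            hreachA.trans (SimpleGraph.Adj.reachable
              (show (G.induce Uᶜ).Adj ⟨w, haU⟩ ⟨u, huU⟩ by simpa using hwu))
          have hreachAV := hreachAU.trans hreachUV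
          rcases Set.mem_insert_iff.mp hz with rfl | hzU
          · exact Or.inl (isAncestor_refl T' r z)
          · exact Or.inr (hancA z ⟨hzU, v, hvU, hzv, hreachAV⟩)
        · rcases Set.mem_insert_iff.mp hz with rfl | hzU
          · have hreachAV : (G.induce Uᶜ).Reachable ⟨a₀, ha₀⟩ ⟨v, hvU⟩ :=
              hreachA.trans (SimpleGraph.Adj.reachable
                (show (G.induce Uᶜ).Adj ⟨z, haU⟩ ⟨v, hvU⟩ by simpa using hzv))
            have hreachAU := hreachAV.trans hreachUV.symm
            exact Or.inl (hancA w ⟨hwU, u, huU, hwu, hreachAU⟩)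
          · exact hliftC hwU hzU (h2 u v huU hvU hreachUV w z hwU hzU hwu hzv)
      obtain ⟨Ts, hTs1, hTs2, hTs3, hTs4⟩ := ih U' T' hcard' hr' hT'G hE' hT'ac hT'reach h1' h2'
      exact ⟨Ts, le_trans hTT' hTs1, hTs2, hTs3, hTs4⟩

/-- Correctness principle of Section 2.  Any partially built DFS tree `T` on a nonempty
`U ⊆ V` satisfying invariants `I₁` and `I₂` extends to a DFS tree of `G`: a spanning
tree `T*` of `G` rooted at `r` containing the edges of `T` in which every edge of `G`
joins two comparable vertices. -/
theorem extends_to_dfs_tree {V : Type*} [Fintype V]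
    (G T : SimpleGraph V) (U : Set V) (r : V)
    (hG : G.Connected) (hU : U.Nonempty) (hr : r ∈ U)
    (hT : TreeOn G T U) (h1 : Inv1 G T U r) (h2 : Inv2 G T U r) :
    ∃ Tstar : SimpleGraph V, T ≤ Tstar ∧ Tstar ≤ G ∧ Tstar.IsTree ∧
      ∀ u v, G.Adj u v → Cmp Tstar r u v := by
  obtain ⟨hTG, hTE, htree⟩ := hT
  have hTac : T.IsAcyclic := acyclic_of_treeOn hTE htree.IsAcyclic
  have hTreach : ∀ u ∈ U, T.Reachable r u := by
    intro u hu
    exact (htree.isConnected.preconnected ⟨r, hr⟩ ⟨u, hu⟩).map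
      (SimpleGraph.Embedding.induce U).toHom
  exact aux G r hG Uᶜ.ncard U T le_rfl hr hTG hTE hTac hTreach h1 h2

end StreamDFS
end

section
/- Let G be a finite simple connected graph on vertex set V, let U ⊊ V be nonempty, and let T be a tree on U rooted at r whose edges are edges of G and which satisfies invariants I1 and I2 with respect to G. Let C be a connected component of the induced subgraph G[V∖U], let x be the deepest vertex of U adjacent in G to C, and let y ∈ C be adjacent to x in G. Then there exists a DFS tree T* of G rooted at r whose edge set contains the edge set of T, in which {x, y} is a tree edge and the vertex set of C is exactly the vertex set of the subtree of T* rooted at y. Consequently, for every edge {w, z} of G with z ∈ C and w ∈ U, the vertex w is an ancestor of z in T*, i.e., every such edge other than {x, y} is a back edge of T*. -/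
namespace StreamDFS

open SimpleGraph Walk

section Infra

variable {V : Type*} {S S' T G : SimpleGraph V} {U : Set V} {r u v a b c x y : V}

lemma anc_refl_s9 : IsAncestor S r u u := fun p _ => p.end_mem_support

lemma anc_trans_s9 (hab : IsAncestor S r a b) (hbc : IsAncestor S r b c) :
    IsAncestor S r a c := by
  classical
  intro p hp
  have hb := hbc p hp
  have := hab (p.takeUntil b hb) (hp.takeUntil hb)
  exact p.support_takeUntil_subset hb this

lemma path_eq (hac : S.IsAcyclic) {p q : S.Walk a b} (hp : p.IsPath) (hq : q.IsPath) :
    p = q := by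
  have := isAcyclic_iff_path_unique.mp hac ⟨p, hp⟩ ⟨q, hq⟩
  exact congrArg Subtype.val this

lemma anc_iff_mem (hac : S.IsAcyclic) {p : S.Walk r v} (hp : p.IsPath) :
    IsAncestor S r u v ↔ u ∈ p.support := by
  constructor
  · exact fun h => h p hp
  · intro h q hq
    rw [path_eq hac hq hp]; exact h

lemma anc_of_le (hle : S ≤ S') (hac' : S'.IsAcyclic) {p : S.Walk r v} (hp : p.IsPath)
    (hu : u ∈ p.support) : IsAncestor S' r u v := by
  have hE : ∀ e ∈ p.edges, e ∈ S'.edgeSet := fun e he =>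
    SimpleGraph.edgeSet_mono hle (p.edges_subset_edgeSet he)
  refine (anc_iff_mem hac' (hp.transfer hE)).mpr ?_
  rwa [Walk.support_transfer]

lemma anc_down (hle : S ≤ S') (h' : IsAncestor S' r u v) : IsAncestor S r u v := by
  intro p hp
  have hE : ∀ e ∈ p.edges, e ∈ S'.edgeSet := fun e he =>
    SimpleGraph.edgeSet_mono hle (p.edges_subset_edgeSet he)
  have := h' (p.transfer S' hE) (hp.transfer hE)
  rwa [Walk.support_transfer] at this

lemma anc_iff_of_le (hle : S ≤ S') (hac' : S'.IsAcyclic) (hreach : S.Reachable r v) :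
    IsAncestor S r u v ↔ IsAncestor S' r u v := by
  classical
  constructor
  · intro h
    obtain ⟨w⟩ := hreach
    exact anc_of_le hle hac' w.toPath.2 (h w.toPath.1 w.toPath.2)
  · exact anc_down hle

lemma cmp_of_mem (hac : S.IsAcyclic) {p : S.Walk r c} (hp : p.IsPath)
    (ha : a ∈ p.support) (hb : b ∈ p.support) : Cmp S r a b := by
  classical
  by_cases hb' : b ∈ (p.takeUntil a ha).support
  · exact Or.inr ((anc_iff_mem hac (hp.takeUntil ha)).mpr hb')
  · have hbd : b ∈ (p.dropUntil a ha).support := by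
      have := (p.take_spec ha) ▸ hb
      rw [Walk.mem_support_append_iff] at this
      tauto
    refine Or.inl ?_
    set pa := p.takeUntil a ha with hpa
    set dr := p.dropUntil a ha with hdr
    set q : S.Walk r b := pa.append (dr.takeUntil b hbd) with hq
    have hqsupp : q.support = pa.support ++ (dr.takeUntil b hbd).support.tail :=
      Walk.support_append _ _
    have hqpath : q.IsPath := by
      rw [Walk.isPath_def, hqsupp]
      have hpsupp : p.support = (pa.support ++ (dr.takeUntil b hbd).support.tail)
          ++ (dr.dropUntil b hbd).support.tail := by
        conv_lhs => rw [← p.take_spec ha]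
        rw [Walk.support_append, ← hpa, ← hdr]
        conv_lhs => rw [← dr.take_spec hbd]
        rw [Walk.support_append]
        rw [List.append_assoc]
        congr 1
        rw [Walk.support_eq_cons (dr.takeUntil b hbd)]
        simp
      have := hp.support_nodup
      rw [hpsupp] at this
      exact this.sublist (List.sublist_append_left _ _)
    have haq : a ∈ q.support := by
      rw [hqsupp]
      exact List.mem_append_left _ pa.end_mem_support
    exact (anc_iff_mem hac hqpath).mpr haq

lemma cmp_of_anc_anc_s9 (hac : S.IsAcyclic) (hreach : S.Reachable r c)
    (ha : IsAncestor S r a c) (hb : IsAncestor S r b c) : Cmp S r a b := by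
  classical
  obtain ⟨w⟩ := hreach
  exact cmp_of_mem hac w.toPath.2 (ha w.toPath.1 w.toPath.2) (hb w.toPath.1 w.toPath.2)

lemma supp_in (hTU : ∀ a b, T.Adj a b → a ∈ U ∧ b ∈ U) :
    ∀ {u v : V} (p : T.Walk u v), u ∈ U → ∀ a ∈ p.support, a ∈ U := by
  intro u v p
  induction p with
  | nil => intro hu a ha; simp at ha; subst ha; exact hu
  | cons h q ih =>
    intro hu a ha
    rw [Walk.support_cons, List.mem_cons] at ha
    rcases ha with rfl | ha
    · exact hu
    · exact ih (hTU _ _ h).2 a ha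

lemma lift_walk {A : Set V} :
    ∀ {u v : V} (p : S.Walk u v) (hu : u ∈ A) (hv : v ∈ A),
      (∀ a ∈ p.support, a ∈ A) →
      ∃ q : (S.induce A).Walk ⟨u, hu⟩ ⟨v, hv⟩,
        q.map (SimpleGraph.Embedding.induce A).toHom = p := by
  intro u v p
  induction p with
  | nil => intro hu hv _; exact ⟨Walk.nil, by simp⟩
  | @cons u w v h q ih =>
    intro hu hv hs
    have hw : w ∈ A := hs w (by simp)
    obtain ⟨q', hq'⟩ := ih hw hv (fun a ha => hs a (by simp [ha]))
    refine ⟨Walk.cons (by exact h) q', ?_⟩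
    subst hq'; rfl

lemma reach_of_treeOn (hT : TreeOn G T U) (hu : u ∈ U) (hv : v ∈ U) :
    T.Reachable u v := by
  have := hT.2.2.isConnected.preconnected ⟨u, hu⟩ ⟨v, hv⟩
  exact this.map (SimpleGraph.Embedding.induce U).toHom

lemma acyclic_of_treeOn_s9 (hT : TreeOn G T U) : T.IsAcyclic := by
  rw [isAcyclic_iff_path_unique]
  rintro v w ⟨p, hp⟩ ⟨q, hq⟩
  by_cases hvw : v = w
  · subst hvw
    have hp' := Walk.isPath_iff_eq_nil.mp hp
    have hq' := Walk.isPath_iff_eq_nil.mp hq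
    simp [hp', hq']
  · have hv : v ∈ U := by
      obtain ⟨w', h, p', rfl⟩ := Walk.exists_eq_cons_of_ne hvw p
      exact (hT.2.1 _ _ h).1
    have hw : w ∈ U := by
      obtain ⟨w', h, p', hh⟩ := Walk.exists_eq_cons_of_ne (Ne.symm hvw) p.reverse
      exact (hT.2.1 _ _ h).1
    obtain ⟨p', hp'⟩ := lift_walk p hv hw (supp_in hT.2.1 p hv)
    obtain ⟨q', hq'⟩ := lift_walk q hv hw (supp_in hT.2.1 q hv)
    have hpp : p'.IsPath := Walk.IsPath.of_map
      (f := (SimpleGraph.Embedding.induce U).toHom) (by rw [hp']; exact hp)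
    have hqq : q'.IsPath := Walk.IsPath.of_map
      (f := (SimpleGraph.Embedding.induce U).toHom) (by rw [hq']; exact hq)
    have := isAcyclic_iff_path_unique.mp hT.2.2.IsAcyclic ⟨p', hpp⟩ ⟨q', hqq⟩
    have : p' = q' := congrArg Subtype.val this
    subst this
    simp only [Subtype.mk.injEq]
    rw [← hp', ← hq']

lemma anc_of_cmp_of_dist (hru : S.Reachable r u) (hcmp : Cmp S r u v)
    (hd : S.dist r u ≤ S.dist r v) : IsAncestor S r u v := by
  classical
  rcases hcmp with h | h
  · exact h
  · obtain ⟨p, hp, hlen⟩ := hru.exists_path_of_dist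
    have hv : v ∈ p.support := h p hp
    have h1 : S.dist r v ≤ (p.takeUntil v hv).length := SimpleGraph.dist_le _
    have h2 := p.length_takeUntil_le hv
    have hsplit := p.take_spec hv
    have h3 : p.length = (p.takeUntil v hv).length + (p.dropUntil v hv).length := by
      conv_lhs => rw [← hsplit]
      exact Walk.length_append _ _
    have h4 : (p.dropUntil v hv).length = 0 := by omega
    have : v = u := Walk.eq_of_length_eq_zero h4
    subst this
    exact anc_refl_s9

lemma Tp_adj (hxy : x ≠ y) {a b : V} :
    (T ⊔ fromEdgeSet {s(x, y)}).Adj a b ↔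
      T.Adj a b ∨ (a = x ∧ b = y) ∨ (a = y ∧ b = x) := by
  rw [sup_adj, fromEdgeSet_adj, Set.mem_singleton_iff, Sym2.eq_iff]
  constructor
  · rintro (h | ⟨h, -⟩)
    · exact Or.inl h
    · exact Or.inr h
  · rintro (h | h)
    · exact Or.inl h
    · refine Or.inr ⟨h, ?_⟩
      rcases h with ⟨rfl, rfl⟩ | ⟨rfl, rfl⟩
      · exact hxy
      · exact hxy.symm

lemma no_cycle_at_unique_nbr (h : ∀ w, S.Adj y w → w = x) (c : S.Walk y y)
    (hc : c.IsCycle) : False := by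
  cases c with
  | nil => exact hc.ne_nil rfl
  | @cons _ w _ hadj q =>
    obtain ⟨w', hadj', q', hq'⟩ := Walk.exists_eq_cons_of_ne hadj.ne q.reverse
    have hww' : w' = w := (h _ hadj').trans (h _ hadj).symm
    have h1 : s(y, w') ∈ q.reverse.edges := by rw [hq']; simp
    rw [hww'] at h1
    have h2 : s(y, w) ∈ q.edges := by rwa [Walk.edges_reverse, List.mem_reverse] at h1
    have h3 := hc.edges_nodup
    rw [Walk.edges_cons] at h3
    exact (List.nodup_cons.mp h3).1 h2

end Infra

section Comp

variable {V : Type*} {G : SimpleGraph V} {U : Set V} {r u v a b c x y : V}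

lemma mem_compOf_self (hv : v ∉ U) : v ∈ compOf G U v := ⟨hv, hv, Reachable.refl _⟩

lemma compOf_out (ha : a ∈ compOf G U v) : a ∉ U := ha.2.1

lemma compOf_reach (hv : v ∉ U) (ha' : a ∉ U) (ha : a ∈ compOf G U v) :
    (G.induce Uᶜ).Reachable ⟨v, hv⟩ ⟨a, ha'⟩ := ha.2.2

lemma compOf_eq (ha : a ∈ compOf G U v) : compOf G U a = compOf G U v := by
  obtain ⟨hv, haU, hva⟩ := ha
  ext b
  constructor
  · rintro ⟨_, hb, hab⟩; exact ⟨hv, hb, hva.trans hab⟩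
  · rintro ⟨_, hb, hvb⟩; exact ⟨haU, hb, hva.symm.trans hvb⟩

lemma adj_comp (hab : G.Adj a b) (ha : a ∉ U) (hb : b ∉ U) : b ∈ compOf G U a :=
  ⟨ha, hb, SimpleGraph.Adj.reachable (by exact hab)⟩

lemma supp_in_comp (hv : v ∉ U) {s t : ↥(Uᶜ)} (p : (G.induce Uᶜ).Walk s t)
    (hx : (s : V) ∈ compOf G U v) : ∀ w ∈ p.support, (w : V) ∈ compOf G U v := by
  induction p with
  | nil => intro w hw; simp at hw; subst hw; exact hx
  | @cons s t u h q ih =>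
    intro w hw
    rw [Walk.support_cons, List.mem_cons] at hw
    rcases hw with rfl | hw
    · exact hx
    · have ht : (t : V) ∈ compOf G U v := by
        have h2 : (t : V) ∈ compOf G U (s : V) := adj_comp (by exact h) s.2 t.2
        rwa [compOf_eq hx] at h2
      exact ih ht w hw

lemma attach_exists :
    ∀ {v w : V} (_ : G.Walk v w), w ∈ U → v ∉ U →
      ∃ z ∈ U, ∃ a ∈ compOf G U v, G.Adj z a := by
  intro v w p
  induction p with
  | nil => intro hw hv; exact absurd hw hv
  | @cons s t u h q ih =>
    intro hw hv
    by_cases ht : t ∈ U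
    · exact ⟨t, ht, s, mem_compOf_self hv, h.symm⟩
    · obtain ⟨z, hz, a, ha, hadj⟩ := ih hw ht
      refine ⟨z, hz, a, ?_, hadj⟩
      have hst : t ∈ compOf G U s := adj_comp h hv ht
      rw [← compOf_eq hst]; exact ha

lemma shrink_reach {A B : Set V} (hBA : B ⊆ A) :
    ∀ {s t : ↥A} (p : (G.induce A).Walk s t) (_ : ∀ w ∈ p.support, (w : V) ∈ B)
      (hs' : (s : V) ∈ B) (ht' : (t : V) ∈ B),
      (G.induce B).Reachable ⟨s, hs'⟩ ⟨t, ht'⟩ := by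
  intro s t p
  induction p with
  | nil => intro _ hs' ht'; exact Reachable.refl _
  | @cons s m t h q ih =>
    intro hsupp hs' ht'
    have hm : (m : V) ∈ B := hsupp m (by simp)
    have h1 : (G.induce B).Adj ⟨s, hs'⟩ ⟨m, hm⟩ := by exact h
    exact h1.reachable.trans (ih (fun w hw => hsupp w (by simp [hw])) hm ht')

lemma comp_shrink_subset {y : V} (hv : v ∉ insert y U) :
    compOf G (insert y U) v ⊆ compOf G U v := by
  rintro a ⟨hv', ha, hreach⟩
  refine ⟨fun h => hv' (Set.mem_insert_of_mem _ h), fun h => ha (Set.mem_insert_of_mem _ h), ?_⟩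
  have hle : (insert y U)ᶜ ⊆ Uᶜ := Set.compl_subset_compl.mpr (Set.subset_insert _ _)
  exact hreach.map (G.induceHomOfLE hle).toHom

lemma comp_grow_subset {y : V} (hyU : y ∉ U) (hv : v ∉ U) (hvy : v ∉ compOf G U y) :
    compOf G U v ⊆ compOf G (insert y U) v := by
  have hyv : y ∉ compOf G U v := by
    intro hy
    exact hvy ((compOf_eq hy) ▸ mem_compOf_self hv)
  rintro a ha
  have haU := compOf_out ha
  obtain ⟨p⟩ := compOf_reach hv haU ha
  have hsupp : ∀ w ∈ p.support, (w : V) ∈ (insert y U)ᶜ := by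
    intro w hw
    have hwc := supp_in_comp hv p (mem_compOf_self hv) w hw
    simp only [Set.mem_compl_iff, Set.mem_insert_iff, not_or]
    exact ⟨fun h => hyv (h ▸ hwc), fun h => (compOf_out hwc) h⟩
  have hv' : v ∉ insert y U := fun h => by
    rcases Set.mem_insert_iff.mp h with rfl | h
    · exact hvy (mem_compOf_self hyU)
    · exact hv h
  have ha' : a ∉ insert y U := by
    have := hsupp _ p.end_mem_support
    simpa using this
  exact ⟨hv', ha', shrink_reach (Set.compl_subset_compl.mpr (Set.subset_insert _ _))
    p hsupp (by simpa using hv') (by simpa using ha')⟩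

lemma comp_attach_y (hyU : y ∉ U) :
    ∀ {s t : ↥(Uᶜ)} (_ : (G.induce Uᶜ).Walk s t), (t : V) = y → (s : V) ≠ y →
      ∃ a ∈ compOf G (insert y U) (s : V), G.Adj y a := by
  intro s t p
  induction p with
  | nil => intro ht hs; exact absurd ht hs
  | @cons s m t h q ih =>
    intro ht hsy
    by_cases hmy : (m : V) = y
    · have hadj : G.Adj (s : V) (m : V) := h
      rw [hmy] at hadj
      refine ⟨s, ?_, hadj.symm⟩
      refine mem_compOf_self ?_
      simp only [Set.mem_insert_iff, not_or]
      exact ⟨hsy, s.2⟩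
    · obtain ⟨a, ha, hadj⟩ := ih ht hmy
      refine ⟨a, ?_, hadj⟩
      have hmem : (m : V) ∈ compOf G (insert y U) (s : V) := by
        refine adj_comp (by exact h) ?_ ?_
        · simp only [Set.mem_insert_iff, not_or]; exact ⟨hsy, s.2⟩
        · simp only [Set.mem_insert_iff, not_or]; exact ⟨hmy, m.2⟩
      rwa [compOf_eq hmem] at ha

end Comp

section Step

variable {V : Type*} {G T : SimpleGraph V} {U : Set V} {r u v w x y : V}

lemma Tp_nbr (hT : TreeOn G T U) (hx : x ∈ U) (hyU : y ∉ U) :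
    ∀ w, (T ⊔ fromEdgeSet {s(x, y)}).Adj y w → w = x := by
  intro w hw
  have hxyne : x ≠ y := fun h => hyU (h ▸ hx)
  rw [Tp_adj hxyne] at hw
  rcases hw with h | ⟨h1, h2⟩ | ⟨-, h2⟩
  · exact absurd (hT.2.1 _ _ h).1 hyU
  · exfalso; apply hyU; rw [h1]; exact hx
  · exact h2

lemma Tp_acyclic (hT : TreeOn G T U) (hx : x ∈ U) (hyU : y ∉ U) :
    (T ⊔ fromEdgeSet {s(x, y)}).IsAcyclic := by
  classical
  intro v c hc
  by_cases he : s(x, y) ∈ c.edges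
  · have hy : y ∈ c.support := Walk.snd_mem_support_of_mem_edges c he
    exact no_cycle_at_unique_nbr (Tp_nbr hT hx hyU) (c.rotate y hy) (hc.rotate hy)
  · have hE : ∀ e ∈ c.edges, e ∈ T.edgeSet := by
      intro e hee
      have h3 := c.edges_subset_edgeSet hee
      rw [SimpleGraph.edgeSet_sup] at h3
      rcases h3 with h | h
      · exact h
      · rw [SimpleGraph.edgeSet_fromEdgeSet] at h
        have : e = s(x, y) := h.1
        exact absurd (this ▸ hee) he
    exact acyclic_of_treeOn_s9 hT _ (hc.transfer hE)

lemma Tp_treeOn (hT : TreeOn G T U) (hr : r ∈ U) (hx : x ∈ U) (hyU : y ∉ U)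
    (hxy : G.Adj x y) :
    TreeOn G (T ⊔ fromEdgeSet {s(x, y)}) (insert y U) := by
  have hxyne : x ≠ y := fun h => hyU (h ▸ hx)
  have hedges : ∀ a b, (T ⊔ fromEdgeSet {s(x, y)}).Adj a b →
      a ∈ insert y U ∧ b ∈ insert y U := by
    intro a b hab
    rw [Tp_adj hxyne] at hab
    rcases hab with h | ⟨rfl, rfl⟩ | ⟨rfl, rfl⟩
    · exact ⟨Set.mem_insert_of_mem _ (hT.2.1 _ _ h).1, Set.mem_insert_of_mem _ (hT.2.1 _ _ h).2⟩
    · exact ⟨Set.mem_insert_of_mem _ hx, Set.mem_insert _ _⟩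
    · exact ⟨Set.mem_insert _ _, Set.mem_insert_of_mem _ hx⟩
  refine ⟨sup_le hT.1 ?_, hedges, ?_, ?_⟩
  · intro a b hab
    rw [fromEdgeSet_adj, Set.mem_singleton_iff, Sym2.eq_iff] at hab
    rcases hab.1 with ⟨rfl, rfl⟩ | ⟨rfl, rfl⟩
    · exact hxy
    · exact hxy.symm
  · -- connected
    rw [connected_iff]
    constructor
    · rintro ⟨a, ha⟩ ⟨b, hb⟩
      have hreach : ∀ c ∈ insert y U, (T ⊔ fromEdgeSet {s(x, y)}).Reachable c x := by
        intro c hc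
        rcases Set.mem_insert_iff.mp hc with rfl | hc
        · refine SimpleGraph.Adj.reachable ?_
          rw [Tp_adj hxyne]
          exact Or.inr (Or.inr ⟨rfl, rfl⟩)
        · exact (reach_of_treeOn hT hc hx).mono le_sup_left
      obtain ⟨p⟩ := (hreach a ha).trans (hreach b hb).symm
      obtain ⟨q, -⟩ := lift_walk p ha hb (supp_in hedges p ha)
      exact ⟨q⟩
    · exact ⟨⟨y, Set.mem_insert _ _⟩⟩
  · -- acyclic
    intro v c hc
    have hc' := (Walk.map_isCycle_iff_of_injective
      (f := (SimpleGraph.Embedding.induce (insert y U)).toHom)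
      (Subtype.val_injective)).mpr hc
    exact Tp_acyclic hT hx hyU _ hc'

lemma x_anc_y (hT : TreeOn G T U) (hr : r ∈ U) (hx : x ∈ U) (hyU : y ∉ U) :
    IsAncestor (T ⊔ fromEdgeSet {s(x, y)}) r x y := by
  intro p hp
  have hry : r ≠ y := fun h => hyU (h ▸ hr)
  obtain ⟨w, hadj, p', hp'⟩ := Walk.exists_eq_cons_of_ne (Ne.symm hry) p.reverse
  have hw : w = x := Tp_nbr hT hx hyU w hadj
  have hxs : x ∈ p.reverse.support := by
    rw [hp', Walk.support_cons]
    exact List.mem_cons_of_mem _ (hw ▸ p'.start_mem_support)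
  rwa [Walk.support_reverse, List.mem_reverse] at hxs

lemma anc_upT (hT : TreeOn G T U) {S' : SimpleGraph V} (hle : T ≤ S')
    (hac' : S'.IsAcyclic) (hr : r ∈ U) (hv : v ∈ U) (h : IsAncestor T r u v) :
    IsAncestor S' r u v :=
  (anc_iff_of_le hle hac' (reach_of_treeOn hT hr hv)).mp h

lemma anc_up_y (hT : TreeOn G T U) (hr : r ∈ U) (hx : x ∈ U) (hyU : y ∉ U)
    (h : IsAncestor T r w x) : IsAncestor (T ⊔ fromEdgeSet {s(x, y)}) r w y :=
  anc_trans_s9 (anc_upT hT le_sup_left (Tp_acyclic hT hx hyU) hr hx h) (x_anc_y hT hr hx hyU)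

lemma y_not_anc (hT : TreeOn G T U) (hr : r ∈ U) (hyU : y ∉ U) (hv : v ∈ U)
    {S' : SimpleGraph V} (hle : T ≤ S') (h : IsAncestor S' r y v) : False := by
  classical
  have h' : IsAncestor T r y v := anc_down hle h
  obtain ⟨q⟩ := reach_of_treeOn hT hr hv
  exact hyU (supp_in hT.2.1 q.toPath.1 hr y (h' q.toPath.1 q.toPath.2))

lemma anc_y_iff (hT : TreeOn G T U) (hr : r ∈ U) (hx : x ∈ U) (hyU : y ∉ U)
    (hu : u ∈ U) :
    IsAncestor (T ⊔ fromEdgeSet {s(x, y)}) r u y ↔ IsAncestor T r u x := by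
  classical
  have hac' := Tp_acyclic hT hx hyU
  constructor
  · intro h
    obtain ⟨w⟩ := reach_of_treeOn hT hr hx
    set p := w.toPath with hpdef
    have hE : ∀ e ∈ p.1.edges, e ∈ (T ⊔ fromEdgeSet {s(x, y)}).edgeSet := fun e he =>
      SimpleGraph.edgeSet_mono le_sup_left (p.1.edges_subset_edgeSet he)
    have hadjxy : (T ⊔ fromEdgeSet {s(x, y)}).Adj x y := by
      rw [Tp_adj (show x ≠ y from fun h => hyU (h ▸ hx))]
      exact Or.inr (Or.inl ⟨rfl, rfl⟩)
    set p' := (p.1.transfer _ hE).concat hadjxy with hp'def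
    have hsupp : (p.1.transfer _ hE).support = p.1.support := Walk.support_transfer _ _
    have hynot : y ∉ (p.1.transfer _ hE).support := by
      rw [hsupp]
      intro hmem
      exact hyU (supp_in hT.2.1 p.1 hr y hmem)
    have hp'path : p'.IsPath := by
      rw [hp'def, ← Walk.isPath_reverse_iff, Walk.reverse_concat, Walk.cons_isPath_iff]
      refine ⟨(p.2.transfer hE).reverse, ?_⟩
      rwa [Walk.support_reverse, List.mem_reverse]
    have hu' := h p' hp'path
    rw [hp'def, Walk.support_concat, hsupp, List.mem_append] at hu'
    rcases hu' with hu' | hu'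
    · exact (anc_iff_mem (acyclic_of_treeOn_s9 hT) p.2).mpr hu'
    · simp only [List.mem_singleton] at hu'
      exact absurd (show y ∈ U by rw [← hu']; exact hu) hyU
  · intro h
    exact anc_up_y hT hr hx hyU h

end Step

section Inv

variable {V : Type*} {G T : SimpleGraph V} {U : Set V} {r u v w x y : V}

lemma inv1' (hT : TreeOn G T U) (hr : r ∈ U) (hx : x ∈ U) (hyU : y ∉ U)
    (h1 : Inv1 G T U r)
    (hedge : ∀ w ∈ U, (∃ a ∈ compOf G U y, G.Adj w a) → IsAncestor T r w x) :
    Inv1 G (T ⊔ fromEdgeSet {s(x, y)}) (insert y U) r := by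
  intro u v hadj hu hv
  have hac' := Tp_acyclic hT hx hyU (y := y)
  rcases Set.mem_insert_iff.mp hu with hu' | hu
  · rw [hu'] at hadj ⊢
    rcases Set.mem_insert_iff.mp hv with hv' | hv
    · rw [hv'] at hadj; exact absurd rfl hadj.ne
    · exact Or.inr (anc_up_y hT hr hx hyU
        (hedge v hv ⟨y, mem_compOf_self hyU, hadj.symm⟩))
  · rcases Set.mem_insert_iff.mp hv with hv' | hv
    · rw [hv'] at hadj ⊢
      exact Or.inl (anc_up_y hT hr hx hyU
        (hedge u hu ⟨y, mem_compOf_self hyU, hadj⟩))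
    · rcases h1 u v hadj hu hv with h | h
      · exact Or.inl (anc_upT hT le_sup_left hac' hr hv h)
      · exact Or.inr (anc_upT hT le_sup_left hac' hr hu h)

lemma inv2' (hT : TreeOn G T U) (hr : r ∈ U) (hx : x ∈ U) (hyU : y ∉ U)
    (hxy : G.Adj x y) (h2 : Inv2 G T U r)
    (hedge : ∀ w ∈ U, (∃ a ∈ compOf G U y, G.Adj w a) → IsAncestor T r w x) :
    Inv2 G (T ⊔ fromEdgeSet {s(x, y)}) (insert y U) r := by
  intro u v hu hv hreach w z hw hz hwu hzv
  have hac' := Tp_acyclic hT hx hyU (y := y)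
  have huU : u ∉ U := fun h => hu (Set.mem_insert_of_mem _ h)
  have hvU : v ∉ U := fun h => hv (Set.mem_insert_of_mem _ h)
  have hle : (insert y U)ᶜ ⊆ Uᶜ := Set.compl_subset_compl.mpr (Set.subset_insert _ _)
  have hreachU : (G.induce Uᶜ).Reachable ⟨u, huU⟩ ⟨v, hvU⟩ :=
    hreach.map (G.induceHomOfLE hle).toHom
  have hvcomp : v ∈ compOf G U u := ⟨huU, hvU, hreachU⟩
  have hT' := Tp_treeOn hT hr hx hyU hxy
  by_cases hC : u ∈ compOf G U y
  · have key : ∀ w', w' ∈ insert y U → ∀ t, G.Adj w' t → t ∈ compOf G U y →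
        IsAncestor (T ⊔ fromEdgeSet {s(x, y)}) r w' y := by
      intro w' hw' t hadj htC
      rcases Set.mem_insert_iff.mp hw' with he | hw'
      · rw [he]; exact anc_refl_s9
      · exact anc_up_y hT hr hx hyU (hedge w' hw' ⟨t, htC, hadj⟩)
    have hkw := key w hw u hwu hC
    have hvC : v ∈ compOf G U y := by rw [← compOf_eq hC]; exact hvcomp
    have hkz := key z hz v hzv hvC
    exact cmp_of_anc_anc_s9 hac'
      (reach_of_treeOn hT' (Set.mem_insert_of_mem _ hr) (Set.mem_insert _ _)) hkw hkz
  · have hwy : w ≠ y := by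
      intro h
      apply hC
      rw [h] at hwu
      exact adj_comp hwu hyU huU
    have hzy : z ≠ y := by
      intro h
      rw [h] at hzv
      have hvCy : v ∈ compOf G U y := adj_comp hzv hyU hvU
      have huCv : u ∈ compOf G U v := by
        rw [compOf_eq hvcomp]; exact mem_compOf_self huU
      exact hC ((compOf_eq hvCy) ▸ huCv)
    have hwU : w ∈ U := (Set.mem_insert_iff.mp hw).resolve_left hwy
    have hzU : z ∈ U := (Set.mem_insert_iff.mp hz).resolve_left hzy
    rcases h2 u v huU hvU hreachU w z hwU hzU hwu hzv with h | h
    · exact Or.inl (anc_upT hT le_sup_left hac' hr hzU h)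
    · exact Or.inr (anc_upT hT le_sup_left hac' hr hwU h)

end Inv

lemma build {V : Type*} [Fintype V] {G : SimpleGraph V} (hG : G.Connected) {r : V} :
    ∀ (n : ℕ) (U : Set V) (T : SimpleGraph V), Uᶜ.ncard = n → r ∈ U → TreeOn G T U →
      Inv1 G T U r → Inv2 G T U r →
      ∃ Ts : SimpleGraph V, T ≤ Ts ∧ Ts ≤ G ∧ Ts.IsTree ∧
        (∀ u v, G.Adj u v → Cmp Ts r u v) ∧
        (∀ v, v ∉ U → ∀ u ∈ U, (IsAncestor Ts r u v ↔
          ∃ w ∈ U, (∃ a ∈ compOf G U v, G.Adj w a) ∧ IsAncestor T r u w)) := by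
  intro n
  induction n using Nat.strong_induction_on with
  | _ n ih =>
  intro U T hcard hr hT h1 h2
  by_cases hUuniv : U = Set.univ
  · subst hUuniv
    refine ⟨T, le_refl _, hT.1, ⟨?_, acyclic_of_treeOn_s9 hT⟩, ?_, ?_⟩
    · rw [connected_iff]
      exact ⟨fun a b => reach_of_treeOn hT trivial trivial, ⟨r⟩⟩
    · intro u v hadj; exact h1 u v hadj trivial trivial
    · intro v hv; exact absurd trivial hv
  · obtain ⟨v₀, hv₀⟩ : ∃ v₀, v₀ ∉ U := by
      by_contra h; push_neg at h; exact hUuniv (Set.eq_univ_of_forall h)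
    obtain ⟨p⟩ := hG.preconnected v₀ r
    obtain ⟨z0, hz0U, a0, ha0, hadj0⟩ := attach_exists p hr hv₀
    set W : Set V := {w | w ∈ U ∧ ∃ a ∈ compOf G U v₀, G.Adj w a} with hW
    have hWfin : W.Finite := Set.toFinite _
    have hWne : W.Nonempty := ⟨z0, hz0U, a0, ha0, hadj0⟩
    obtain ⟨x, hxW, hxmax⟩ := Set.exists_max_image W (fun w => T.dist r w) hWfin hWne
    obtain ⟨hxU, ax, haxC, hxax⟩ := hxW
    have hcmpatt : ∀ w ∈ W, Cmp T r w x := by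
      rintro w ⟨hwU, aw, hawC, hwaw⟩
      have hreach : (G.induce Uᶜ).Reachable ⟨aw, compOf_out hawC⟩ ⟨ax, compOf_out haxC⟩ :=
        (compOf_reach hv₀ _ hawC).symm.trans (compOf_reach hv₀ _ haxC)
      exact h2 aw ax _ _ hreach w x hwU hxU hwaw hxax
    have hedge0 : ∀ w ∈ W, IsAncestor T r w x := fun w hw =>
      anc_of_cmp_of_dist (reach_of_treeOn hT hr hw.1) (hcmpatt w hw) (hxmax w hw)
    have hyU : ax ∉ U := compOf_out haxC
    have hcompyx : compOf G U ax = compOf G U v₀ := compOf_eq haxC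
    have hedge : ∀ w ∈ U, (∃ a ∈ compOf G U ax, G.Adj w a) → IsAncestor T r w x := by
      rintro w hwU ⟨a, ha, hadj⟩
      exact hedge0 w ⟨hwU, a, hcompyx ▸ ha, hadj⟩
    have hT' := Tp_treeOn hT hr hxU hyU hxax
    have h1' := inv1' hT hr hxU hyU h1 hedge
    have h2' := inv2' hT hr hxU hyU hxax h2 hedge
    have hcompl : (insert ax U)ᶜ = Uᶜ \ {ax} := by
      ext t; simp only [Set.mem_compl_iff, Set.mem_insert_iff, Set.mem_diff,
        Set.mem_singleton_iff, not_or]; tauto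
    have hcard' : ((insert ax U)ᶜ).ncard < n := by
      rw [hcompl, ← hcard]
      exact Set.ncard_diff_singleton_lt_of_mem hyU (Set.toFinite _)
    obtain ⟨Ts, hTle, hTsG, hTsTree, hDFS, star⟩ :=
      ih _ hcard' (insert ax U) _ rfl (Set.mem_insert_of_mem _ hr) hT' h1' h2'
    refine ⟨Ts, le_trans le_sup_left hTle, hTsG, hTsTree, hDFS, ?_⟩
    intro v hv u hu
    have hac' := Tp_acyclic hT hxU hyU (y := ax)
    have hacs := hTsTree.IsAcyclic
    by_cases hvy : v = ax
    · rw [hvy]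
      have hTsanc : IsAncestor Ts r u ax ↔ IsAncestor (T ⊔ fromEdgeSet {s(x, ax)}) r u ax :=
        (anc_iff_of_le hTle hacs
          (reach_of_treeOn hT' (Set.mem_insert_of_mem _ hr) (Set.mem_insert _ _))).symm
      rw [hTsanc, anc_y_iff hT hr hxU hyU hu]
      constructor
      · intro h; exact ⟨x, hxU, ⟨ax, mem_compOf_self hyU, hxax⟩, h⟩
      · rintro ⟨w, hwU, hatt, hanc⟩; exact anc_trans_s9 hanc (hedge w hwU hatt)
    · by_cases hvC : v ∈ compOf G U ax
      · have hvU' : v ∉ insert ax U := by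
          simp only [Set.mem_insert_iff, not_or]; exact ⟨hvy, hv⟩
        rw [star v hvU' u (Set.mem_insert_of_mem _ hu)]
        constructor
        · rintro ⟨w, hwU', ⟨a, haC', hadjwa⟩, hanc⟩
          rcases Set.mem_insert_iff.mp hwU' with he | hwU
          · rw [he] at hanc
            have hTux : IsAncestor T r u x := (anc_y_iff hT hr hxU hyU hu).mp hanc
            refine ⟨x, hxU, ⟨ax, ?_, hxax⟩, hTux⟩
            rw [compOf_eq hvC]
            exact mem_compOf_self hyU
          · exact ⟨w, hwU, ⟨a, comp_shrink_subset hvU' haC', hadjwa⟩,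
              anc_down le_sup_left hanc⟩
        · rintro ⟨w, hwU, ⟨a, haC, hadjwa⟩, hanc⟩
          have hwx : IsAncestor T r w x := by
            refine hedge w hwU ⟨a, ?_, hadjwa⟩
            rwa [compOf_eq hvC] at haC
          have hT'uy : IsAncestor (T ⊔ fromEdgeSet {s(x, ax)}) r u ax :=
            anc_up_y hT hr hxU hyU (anc_trans_s9 hanc hwx)
          obtain ⟨pp⟩ := (compOf_reach hyU hv hvC).symm
          obtain ⟨a', ha', hadjya'⟩ := comp_attach_y hyU pp rfl hvy
          exact ⟨ax, Set.mem_insert _ _, ⟨a', ha', hadjya'⟩, hT'uy⟩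
      · have hvU' : v ∉ insert ax U := by
          simp only [Set.mem_insert_iff, not_or]; exact ⟨hvy, hv⟩
        rw [star v hvU' u (Set.mem_insert_of_mem _ hu)]
        constructor
        · rintro ⟨w, hwU', ⟨a, haC', hadjwa⟩, hanc⟩
          have hwy : w ≠ ax := by
            intro he
            rw [he] at hadjwa
            have haCU : a ∈ compOf G U v := comp_shrink_subset hvU' haC'
            have hyca : ax ∈ compOf G U a := adj_comp hadjwa.symm (compOf_out haCU) hyU
            rw [compOf_eq haCU] at hyca
            exact hvC ((compOf_eq hyca).symm ▸ mem_compOf_self hv)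
          have hwU : w ∈ U := (Set.mem_insert_iff.mp hwU').resolve_left hwy
          exact ⟨w, hwU, ⟨a, comp_shrink_subset hvU' haC', hadjwa⟩,
            anc_down le_sup_left hanc⟩
        · rintro ⟨w, hwU, ⟨a, haC, hadjwa⟩, hanc⟩
          exact ⟨w, Set.mem_insert_of_mem _ hwU,
            ⟨a, comp_grow_subset hyU hv hvC haC, hadjwa⟩,
            anc_upT hT le_sup_left hac' hr hwU hanc⟩

/-- Static rendering of the **Components Property** (Lemma 2.1).  Let `T` be a partially
built DFS tree on `U ⊊ V` satisfying invariants `I₁` and `I₂`, let `C` be the component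
of `G[V∖U]` containing `c₀`, let `x` be the deepest vertex of `U` adjacent to `C`, and
let `y ∈ C` be adjacent to `x`.  Then there is a DFS tree `T*` of `G` rooted at `r`
containing the edges of `T`, in which `{x, y}` is a tree edge and the vertex set of `C`
is exactly the subtree of `T*` rooted at `y`; consequently every edge of `G` from `U`
into `C` other than `{x, y}` is a back edge of `T*` (its `U`-endpoint is an ancestor of
its `C`-endpoint). -/
theorem components_property {V : Type*} [Fintype V]
    (G T : SimpleGraph V) (U : Set V) (r : V)
    (hG : G.Connected) (hU : U.Nonempty) (hUV : U ≠ Set.univ) (hr : r ∈ U)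
    (hT : TreeOn G T U) (h1 : Inv1 G T U r) (h2 : Inv2 G T U r)
    (c₀ : V) (hc₀ : c₀ ∉ U)
    (x : V) (hx : x ∈ U) (hxC : ∃ a ∈ compOf G U c₀, G.Adj x a)
    (hdeep : ∀ w, w ∈ U → (∃ a ∈ compOf G U c₀, G.Adj w a) →
      depth T r w ≤ depth T r x)
    (y : V) (hy : y ∈ compOf G U c₀) (hxy : G.Adj x y) :
    ∃ Tstar : SimpleGraph V, T ≤ Tstar ∧ Tstar ≤ G ∧ Tstar.IsTree ∧
      (∀ u v, G.Adj u v → Cmp Tstar r u v) ∧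
      Tstar.Adj x y ∧
      (∀ v, v ∈ compOf G U c₀ ↔ IsAncestor Tstar r y v) ∧
      (∀ w z, G.Adj w z → w ∈ U → z ∈ compOf G U c₀ → IsAncestor Tstar r w z) := by
  classical
  have hyU : y ∉ U := compOf_out hy
  have hxyne : x ≠ y := fun h => hyU (h ▸ hx)
  have hCeq : compOf G U y = compOf G U c₀ := compOf_eq hy
  obtain ⟨ax, haxC, hxax⟩ := hxC
  -- every attachment of the component is an ancestor of x in T
  have hedge : ∀ w ∈ U, (∃ a ∈ compOf G U y, G.Adj w a) → IsAncestor T r w x := by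
    rintro w hwU ⟨a, ha, hadj⟩
    rw [hCeq] at ha
    have hreach : (G.induce Uᶜ).Reachable ⟨a, compOf_out ha⟩ ⟨ax, compOf_out haxC⟩ :=
      (compOf_reach hc₀ _ ha).symm.trans (compOf_reach hc₀ _ haxC)
    have hcmp : Cmp T r w x := h2 a ax _ _ hreach w x hwU hx hadj hxax
    exact anc_of_cmp_of_dist (reach_of_treeOn hT hr hwU) hcmp
      (hdeep w hwU ⟨a, ha, hadj⟩)
  have hT' := Tp_treeOn hT hr hx hyU hxy
  have h1' := inv1' hT hr hx hyU h1 hedge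
  have h2' := inv2' hT hr hx hyU hxy h2 hedge
  obtain ⟨Ts, hTle, hTsG, hTsTree, hDFS, star⟩ :=
    build hG ((insert y U)ᶜ).ncard (insert y U) _ rfl (Set.mem_insert_of_mem _ hr)
      hT' h1' h2'
  have hacs := hTsTree.IsAcyclic
  have hac' := Tp_acyclic hT hx hyU (y := y)
  have hT'adjxy : (T ⊔ fromEdgeSet {s(x, y)}).Adj x y := by
    rw [Tp_adj hxyne]; exact Or.inr (Or.inl ⟨rfl, rfl⟩)
  refine ⟨Ts, le_trans le_sup_left hTle, hTsG, hTsTree, hDFS, hTle hT'adjxy, ?_, ?_⟩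
  · -- component = subtree of y
    intro v
    constructor
    · intro hvC
      rw [← hCeq] at hvC
      by_cases hvy : v = y
      · rw [hvy]; exact anc_refl_s9
      · have hvU : v ∉ U := compOf_out hvC
        have hvU' : v ∉ insert y U := by
          simp only [Set.mem_insert_iff, not_or]; exact ⟨hvy, hvU⟩
        refine (star v hvU' y (Set.mem_insert _ _)).mpr ?_
        obtain ⟨pp⟩ := (compOf_reach hyU hvU hvC).symm
        obtain ⟨a', ha', hadjya'⟩ := comp_attach_y hyU pp rfl hvy
        exact ⟨y, Set.mem_insert _ _, ⟨a', ha', hadjya'⟩, anc_refl_s9⟩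
    · intro hanc
      by_contra hvC
      rw [← hCeq] at hvC
      by_cases hvU : v ∈ U
      · exact y_not_anc hT hr hyU hvU (le_trans le_sup_left hTle) hanc
      · have hvy : v ≠ y := fun h => hvC (by rw [h]; exact mem_compOf_self hyU)
        have hvU' : v ∉ insert y U := by
          simp only [Set.mem_insert_iff, not_or]; exact ⟨hvy, hvU⟩
        obtain ⟨w, hwU', ⟨a, haC', hadjwa⟩, hanc'⟩ :=
          (star v hvU' y (Set.mem_insert _ _)).mp hanc
        have hwy : w ≠ y := by
          intro he
          rw [he] at hadjwa
          have haCU : a ∈ compOf G U v := comp_shrink_subset hvU' haC'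
          have hyca : y ∈ compOf G U a := adj_comp hadjwa.symm (compOf_out haCU) hyU
          rw [compOf_eq haCU] at hyca
          exact hvC ((compOf_eq hyca).symm ▸ mem_compOf_self hvU)
        have hwU : w ∈ U := (Set.mem_insert_iff.mp hwU').resolve_left hwy
        exact y_not_anc hT hr hyU hwU le_sup_left hanc'
  · -- back edges
    intro w z hadj hwU hzC
    rw [← hCeq] at hzC
    by_cases hzy : z = y
    · rw [hzy]
      have h3 : IsAncestor (T ⊔ fromEdgeSet {s(x, y)}) r w y := by
        refine anc_up_y hT hr hx hyU (hedge w hwU ⟨z, hzC, hadj⟩)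
      exact anc_upT hT' hTle hacs (Set.mem_insert_of_mem _ hr) (Set.mem_insert _ _) h3
    · have hzU : z ∉ U := compOf_out hzC
      have hzU' : z ∉ insert y U := by
        simp only [Set.mem_insert_iff, not_or]; exact ⟨hzy, hzU⟩
      refine (star z hzU' w (Set.mem_insert_of_mem _ hwU)).mpr ?_
      exact ⟨w, Set.mem_insert_of_mem _ hwU, ⟨z, mem_compOf_self hzU', hadj⟩, anc_refl_s9⟩

end StreamDFS
end
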